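/- The function V = ‖Ṽ‖_∞ − Ṽ is a nonnegative smooth (trigonometric-polynomial) function on ℝ² satisfying: (1) V∘g = V for every g ∈ G (equivalently V∘r = V, V(x+2ν₁) = V(x) and V(x+2ν₂) = V(x) for all x); (2) every point of the kagome lattice Γ is a local minimum of V; and (3) the Hessian of V is positive definite at every point of Γ. -/

import Mathlib

/- STATEMENT 8: the trigonometric-polynomial potential `V = ‖Ṽ‖_∞ − Ṽ` is a nonnegative
smooth function on the plane (identified with `ℂ`), invariant under the symmetries of the
kagome lattice, each point of the kagome lattice is a local minimum of `V`, and the Hessian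
of `V` is positive definite at every point of the lattice. -/

noncomputable section

/-- `ν_ℓ = r^{ℓ−1}(1,0)`, i.e. `e^{i(ℓ−1)π/3}` under the identification `ℝ² ≅ ℂ`. -/
def nuK (ℓ : ℤ) : ℂ := Complex.exp (((ℓ : ℂ) - 1) * Real.pi * Complex.I / 3)

/-- The kagome lattice `Γ = {2α₁ν₁ + 2α₂ν₂ + ν_ℓ : α ∈ ℤ², ℓ ∈ {1,3,5}}`. -/
def GammaK : Set ℂ :=
  {z | ∃ α₁ α₂ ℓ : ℤ, (ℓ = 1 ∨ ℓ = 3 ∨ ℓ = 5) ∧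
    z = 2 * (α₁ : ℂ) * nuK 1 + 2 * (α₂ : ℂ) * nuK 2 + nuK ℓ}

/-- `μ_j = √3 ν_j^⊥`; rotation by `π/2` is multiplication by `i`. -/
def muK (j : ℤ) : ℂ := (Real.sqrt 3 : ℂ) * (Complex.I * nuK j)

/-- The Euclidean dot product `x·μ_j` of the plane, `x·y = Re (x ȳ)`. -/
def dotK (j : ℤ) (x : ℂ) : ℝ := (x * (starRingEnd ℂ) (muK j)).re

/-- `V_j(x) = [cos(π x·μ_j + 3π/2) + 2 cos((π x·μ_j + 3π/2)/3)]²`. -/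
def VjK (j : ℤ) (x : ℂ) : ℝ :=
  (Real.cos (Real.pi * dotK j x + 3 * Real.pi / 2)
    + 2 * Real.cos ((Real.pi * dotK j x + 3 * Real.pi / 2) / 3)) ^ 2

/-- `Ṽ = V₁ + V₃ + V₅`. -/
def VtK (x : ℂ) : ℝ := VjK 1 x + VjK 3 x + VjK 5 x

/-- `V = ‖Ṽ‖_∞ − Ṽ`. -/
def VK (x : ℂ) : ℝ := sSup (Set.range VtK) - VtK x

/-! ### Auxiliary definitions and lemmas -/

section Aux
open Real Complex

/-! #### Explicit values of `nuK`, `muK`, `dotK` -/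

lemma nuK_eq (ℓ : ℤ) : nuK ℓ = Complex.exp ((((ℓ - 1 : ℤ) : ℝ) * Real.pi / 3 : ℝ) * Complex.I) := by
  unfold nuK; congr 1; norm_num; ring

lemma nuK_re_im (ℓ : ℤ) : (nuK ℓ).re = Real.cos ((ℓ - 1 : ℤ) * Real.pi / 3)
    ∧ (nuK ℓ).im = Real.sin ((ℓ - 1 : ℤ) * Real.pi / 3) := by
  rw [nuK_eq]
  constructor <;> simp [Complex.exp_re, Complex.exp_im]

lemma nuK_one : nuK 1 = 1 := by unfold nuK; norm_num

lemma nuK_two_re : (nuK 2).re = 1/2 := by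
  have h := (nuK_re_im 2).1; norm_num at h; rw [h]

lemma nuK_two_im : (nuK 2).im = Real.sqrt 3 / 2 := by
  have h := (nuK_re_im 2).2; norm_num at h; rw [h]

lemma nuK_three_re : (nuK 3).re = -(1/2) := by
  have h := (nuK_re_im 3).1; norm_num at h; rw [h]
  have : 2 * Real.pi / 3 = Real.pi - Real.pi/3 := by ring
  rw [this, Real.cos_pi_sub, Real.cos_pi_div_three]

lemma nuK_three_im : (nuK 3).im = Real.sqrt 3 / 2 := by
  have h := (nuK_re_im 3).2; norm_num at h; rw [h]
  have : 2 * Real.pi / 3 = Real.pi - Real.pi/3 := by ring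
  rw [this, Real.sin_pi_sub, Real.sin_pi_div_three]

lemma nuK_five_re : (nuK 5).re = -(1/2) := by
  have h := (nuK_re_im 5).1; norm_num at h; rw [h]
  have : 4 * Real.pi / 3 = Real.pi/3 + Real.pi := by ring
  rw [this, Real.cos_add_pi, Real.cos_pi_div_three]

lemma nuK_five_im : (nuK 5).im = -(Real.sqrt 3 / 2) := by
  have h := (nuK_re_im 5).2; norm_num at h; rw [h]
  have : 4 * Real.pi / 3 = Real.pi/3 + Real.pi := by ring
  rw [this, Real.sin_add_pi, Real.sin_pi_div_three]

lemma sqrt3_sq : Real.sqrt 3 * Real.sqrt 3 = 3 := Real.mul_self_sqrt (by norm_num)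

lemma sqrt3_pos : (0:ℝ) < Real.sqrt 3 := Real.sqrt_pos.mpr (by norm_num)

lemma dotK_coords (j : ℤ) (x : ℂ) :
    dotK j x = x.re * (muK j).re + x.im * (muK j).im := by
  simp [dotK, Complex.mul_re]

lemma muK_re (j : ℤ) : (muK j).re = -(Real.sqrt 3 * (nuK j).im) := by
  simp [muK, Complex.mul_re, Complex.mul_im]

lemma muK_im (j : ℤ) : (muK j).im = Real.sqrt 3 * (nuK j).re := by
  simp [muK, Complex.mul_re, Complex.mul_im]

lemma dot1 (x : ℂ) : dotK 1 x = Real.sqrt 3 * x.im := by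
  rw [dotK_coords, muK_re, muK_im, nuK_one]; simp; ring

lemma dot3 (x : ℂ) : dotK 3 x = -(3/2) * x.re - Real.sqrt 3 / 2 * x.im := by
  rw [dotK_coords, muK_re, muK_im, nuK_three_re, nuK_three_im]
  linear_combination (-(x.re)/2) * sqrt3_sq

lemma dot5 (x : ℂ) : dotK 5 x = (3/2) * x.re - Real.sqrt 3 / 2 * x.im := by
  rw [dotK_coords, muK_re, muK_im, nuK_five_re, nuK_five_im]
  linear_combination ((x.re)/2) * sqrt3_sq

/-! #### The one-dimensional profile and its derivatives -/

def g0K (d : ℝ) : ℝ := Real.sin (Real.pi * d) - 2 * Real.sin (Real.pi * d / 3)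
def g1K (d : ℝ) : ℝ := Real.pi * Real.cos (Real.pi * d) - (2 * Real.pi / 3) * Real.cos (Real.pi * d / 3)
def g2K (d : ℝ) : ℝ := -(Real.pi ^ 2) * Real.sin (Real.pi * d) + (2 * Real.pi ^ 2 / 9) * Real.sin (Real.pi * d / 3)
def G0K (d : ℝ) : ℝ := (g0K d) ^ 2
def G1K (d : ℝ) : ℝ := 2 * g0K d * g1K d
def G2K (d : ℝ) : ℝ := 2 * ((g1K d) ^ 2 + g0K d * g2K d)

lemma hasDerivAt_g0K (d : ℝ) : HasDerivAt g0K (g1K d) d := by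
  have h1 : HasDerivAt (fun d : ℝ => Real.sin (Real.pi * d)) (Real.cos (Real.pi * d) * Real.pi) d :=
    (Real.hasDerivAt_sin (Real.pi * d)).comp d (by simpa using (hasDerivAt_id d).const_mul Real.pi)
  have h2 : HasDerivAt (fun d : ℝ => Real.sin (Real.pi * d / 3)) (Real.cos (Real.pi * d / 3) * (Real.pi / 3)) d := by
    have : HasDerivAt (fun d : ℝ => Real.pi * d / 3) (Real.pi / 3) d := by
      simpa using ((hasDerivAt_id d).const_mul Real.pi).div_const 3
    exact (Real.hasDerivAt_sin (Real.pi * d / 3)).comp d this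
  have := h1.sub (h2.const_mul 2)
  exact this.congr_deriv (by unfold g1K; ring)

lemma hasDerivAt_g1K (d : ℝ) : HasDerivAt g1K (g2K d) d := by
  have h1 : HasDerivAt (fun d : ℝ => Real.cos (Real.pi * d)) (-Real.sin (Real.pi * d) * Real.pi) d :=
    (Real.hasDerivAt_cos (Real.pi * d)).comp d (by simpa using (hasDerivAt_id d).const_mul Real.pi)
  have h2 : HasDerivAt (fun d : ℝ => Real.cos (Real.pi * d / 3)) (-Real.sin (Real.pi * d / 3) * (Real.pi / 3)) d := by
    have : HasDerivAt (fun d : ℝ => Real.pi * d / 3) (Real.pi / 3) d := by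
      simpa using ((hasDerivAt_id d).const_mul Real.pi).div_const 3
    exact (Real.hasDerivAt_cos (Real.pi * d / 3)).comp d this
  have := (h1.const_mul Real.pi).sub (h2.const_mul (2 * Real.pi / 3))
  exact this.congr_deriv (by unfold g2K; ring)

lemma hasDerivAt_G0K (d : ℝ) : HasDerivAt G0K (G1K d) d := by
  have := (hasDerivAt_g0K d).mul (hasDerivAt_g0K d)
  have h2 : HasDerivAt (fun d => g0K d * g0K d) (G1K d) d := by
    exact this.congr_deriv (by unfold G1K; ring)
  have h3 : G0K = fun d => g0K d * g0K d := by funext t; unfold G0K; ring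
  rw [h3]; exact h2

lemma hasDerivAt_G1K (d : ℝ) : HasDerivAt G1K (G2K d) d := by
  have := ((hasDerivAt_g0K d).mul (hasDerivAt_g1K d)).const_mul 2
  have h2 : HasDerivAt (fun d => 2 * (g0K d * g1K d)) (G2K d) d := by
    exact this.congr_deriv (by unfold G2K; ring)
  have h3 : G1K = fun d => 2 * (g0K d * g1K d) := by funext t; unfold G1K; ring
  rw [h3]; exact h2

lemma contDiff_g0K : ContDiff ℝ (⊤ : ℕ∞) g0K := by
  unfold g0K
  exact (Real.contDiff_sin.comp ((contDiff_const.mul contDiff_id))).sub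
    (contDiff_const.mul (Real.contDiff_sin.comp ((contDiff_const.mul contDiff_id).div_const 3)))

lemma contDiff_G0K : ContDiff ℝ (⊤ : ℕ∞) G0K := contDiff_g0K.pow 2

/-! #### Parity and periodicity -/

lemma neg_one_zpow_sq (k : ℤ) : ((-1 : ℝ) ^ k) * ((-1 : ℝ) ^ k) = 1 := by
  rw [← zpow_add₀ (by norm_num : (-1:ℝ) ≠ 0)]
  have : k + k = 2 * k := by ring
  rw [this, zpow_mul]
  norm_num

lemma zpow_three_mul (k : ℤ) : ((-1 : ℝ) ^ (3 * k)) = (-1 : ℝ) ^ k := by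
  rw [zpow_mul]; norm_num

lemma g0K_shift (k : ℤ) (r : ℝ) : g0K (3 * k + r) = (-1 : ℝ) ^ k * g0K r := by
  unfold g0K
  have e1 : Real.pi * (3 * (k : ℝ) + r) = Real.pi * r + (3 * k : ℤ) * Real.pi := by push_cast; ring
  have e2 : Real.pi * (3 * (k : ℝ) + r) / 3 = Real.pi * r / 3 + (k : ℤ) * Real.pi := by push_cast; ring
  rw [e2, e1, Real.sin_add_int_mul_pi, Real.sin_add_int_mul_pi, zpow_three_mul]
  ring

lemma g1K_shift (k : ℤ) (r : ℝ) : g1K (3 * k + r) = (-1 : ℝ) ^ k * g1K r := by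
  unfold g1K
  have e1 : Real.pi * (3 * (k : ℝ) + r) = Real.pi * r + (3 * k : ℤ) * Real.pi := by push_cast; ring
  have e2 : Real.pi * (3 * (k : ℝ) + r) / 3 = Real.pi * r / 3 + (k : ℤ) * Real.pi := by push_cast; ring
  rw [e2, e1, Real.cos_add_int_mul_pi, Real.cos_add_int_mul_pi, zpow_three_mul]
  ring

lemma g2K_shift (k : ℤ) (r : ℝ) : g2K (3 * k + r) = (-1 : ℝ) ^ k * g2K r := by
  unfold g2K
  have e1 : Real.pi * (3 * (k : ℝ) + r) = Real.pi * r + (3 * k : ℤ) * Real.pi := by push_cast; ring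
  have e2 : Real.pi * (3 * (k : ℝ) + r) / 3 = Real.pi * r / 3 + (k : ℤ) * Real.pi := by push_cast; ring
  rw [e2, e1, Real.sin_add_int_mul_pi, Real.sin_add_int_mul_pi, zpow_three_mul]
  ring

lemma G0K_shift (k : ℤ) (r : ℝ) : G0K (3 * k + r) = G0K r := by
  unfold G0K; rw [g0K_shift]
  have h := neg_one_zpow_sq k
  linear_combination (g0K r ^ 2) * h

lemma G2K_shift (k : ℤ) (r : ℝ) : G2K (3 * k + r) = G2K r := by
  unfold G2K; rw [g0K_shift, g1K_shift, g2K_shift]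
  have h := neg_one_zpow_sq k
  linear_combination (2 * (g1K r ^ 2 + g0K r * g2K r)) * h

/-! #### Special values -/

lemma sin_three_pi_div_two : Real.sin (3 * Real.pi / 2) = -1 := by
  have : 3 * Real.pi / 2 = Real.pi / 2 + Real.pi := by ring
  rw [this, Real.sin_add_pi, Real.sin_pi_div_two]

lemma cos_three_pi_div_two : Real.cos (3 * Real.pi / 2) = 0 := by
  have : 3 * Real.pi / 2 = Real.pi / 2 + Real.pi := by ring
  rw [this, Real.cos_add_pi, Real.cos_pi_div_two]
  norm_num

lemma g0K_zero : g0K 0 = 0 := by unfold g0K; simp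
lemma g1K_zero : g1K 0 = Real.pi / 3 := by unfold g1K; simp; ring
lemma g0K_th : g0K (3/2) = -3 := by
  unfold g0K
  have e1 : Real.pi * (3/2) = 3 * Real.pi / 2 := by ring
  have e2 : Real.pi * (3/2) / 3 = Real.pi / 2 := by ring
  rw [e2, e1, sin_three_pi_div_two, Real.sin_pi_div_two]; norm_num
lemma g1K_th : g1K (3/2) = 0 := by
  unfold g1K
  have e1 : Real.pi * (3/2) = 3 * Real.pi / 2 := by ring
  have e2 : Real.pi * (3/2) / 3 = Real.pi / 2 := by ring
  rw [e2, e1, cos_three_pi_div_two, Real.cos_pi_div_two]; ring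
lemma g2K_th : g2K (3/2) = 11 * Real.pi ^ 2 / 9 := by
  unfold g2K
  have e1 : Real.pi * (3/2) = 3 * Real.pi / 2 := by ring
  have e2 : Real.pi * (3/2) / 3 = Real.pi / 2 := by ring
  rw [e2, e1, sin_three_pi_div_two, Real.sin_pi_div_two]; ring
lemma g0K_neg (d : ℝ) : g0K (-d) = - g0K d := by
  unfold g0K
  have e1 : Real.pi * (-d) = -(Real.pi * d) := by ring
  have e2 : Real.pi * (-d) / 3 = -(Real.pi * d / 3) := by ring
  rw [e2, e1, Real.sin_neg, Real.sin_neg]; ring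
lemma g1K_neg (d : ℝ) : g1K (-d) = g1K d := by
  unfold g1K
  have e1 : Real.pi * (-d) = -(Real.pi * d) := by ring
  have e2 : Real.pi * (-d) / 3 = -(Real.pi * d / 3) := by ring
  rw [e2, e1, Real.cos_neg, Real.cos_neg]
lemma g2K_neg (d : ℝ) : g2K (-d) = - g2K d := by
  unfold g2K
  have e1 : Real.pi * (-d) = -(Real.pi * d) := by ring
  have e2 : Real.pi * (-d) / 3 = -(Real.pi * d / 3) := by ring
  rw [e2, e1, Real.sin_neg, Real.sin_neg]; ring

lemma G0K_neg (d : ℝ) : G0K (-d) = G0K d := by unfold G0K; rw [g0K_neg]; ring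
lemma G2K_neg (d : ℝ) : G2K (-d) = G2K d := by unfold G2K; rw [g0K_neg, g1K_neg, g2K_neg]; ring

lemma G0K_zero : G0K 0 = 0 := by unfold G0K; rw [g0K_zero]; norm_num
lemma G0K_th : G0K (3/2) = 9 := by unfold G0K; rw [g0K_th]; norm_num
lemma G0K_nth : G0K (-(3/2)) = 9 := by rw [G0K_neg, G0K_th]
lemma G2K_zero : G2K 0 = 2 * Real.pi ^ 2 / 9 := by
  unfold G2K; rw [g0K_zero, g1K_zero]; ring
lemma G2K_th : G2K (3/2) = -(22 * Real.pi ^ 2 / 3) := by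
  unfold G2K; rw [g0K_th, g1K_th, g2K_th]; ring
lemma G2K_nth : G2K (-(3/2)) = -(22 * Real.pi ^ 2 / 3) := by rw [G2K_neg, G2K_th]

/-! #### The key polynomial inequality (certificate) -/

lemma certD (x y : ℝ) (hx1 : -1 ≤ x) (hx2 : x ≤ 1) (hy1 : -1 ≤ y) (hy2 : y ≤ 1) :
    (9 - 8*(x*y))^2 * ((1-x^2)*(1-y^2)) ≤ (17 + 9*(x+y) + 9*(x*y) - 8*(x*y)^2)^2 := by
  have p1 : (0:ℝ) ≤ 1 + x := by linarith
  have p2 : (0:ℝ) ≤ 1 - x := by linarith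
  have p3 : (0:ℝ) ≤ 1 + y := by linarith
  have p4 : (0:ℝ) ≤ 1 - y := by linarith
  linarith [mul_nonneg (mul_nonneg (mul_nonneg (mul_nonneg (pow_nonneg p1 0) (pow_nonneg p2 0)) (pow_nonneg p3 2)) (pow_nonneg p4 0)) (pow_nonneg (sq_nonneg (x+y)) 1),
    mul_nonneg (mul_nonneg (mul_nonneg (mul_nonneg (pow_nonneg p1 0) (pow_nonneg p2 0)) (pow_nonneg p3 2)) (pow_nonneg p4 0)) (pow_nonneg (sq_nonneg (x+y)) 2),
    mul_nonneg (mul_nonneg (mul_nonneg (mul_nonneg (pow_nonneg p1 0) (pow_nonneg p2 0)) (pow_nonneg p3 2)) (pow_nonneg p4 1)) (pow_nonneg (sq_nonneg (x+y)) 1),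
    mul_nonneg (mul_nonneg (mul_nonneg (mul_nonneg (pow_nonneg p1 0) (pow_nonneg p2 0)) (pow_nonneg p3 2)) (pow_nonneg p4 1)) (pow_nonneg (sq_nonneg (x+y)) 2),
    mul_nonneg (mul_nonneg (mul_nonneg (mul_nonneg (pow_nonneg p1 0) (pow_nonneg p2 0)) (pow_nonneg p3 2)) (pow_nonneg p4 2)) (pow_nonneg (sq_nonneg (x+y)) 2),
    mul_nonneg (mul_nonneg (mul_nonneg (mul_nonneg (pow_nonneg p1 0) (pow_nonneg p2 0)) (pow_nonneg p3 2)) (pow_nonneg p4 3)) (pow_nonneg (sq_nonneg (x+y)) 1),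
    mul_nonneg (mul_nonneg (mul_nonneg (mul_nonneg (pow_nonneg p1 0) (pow_nonneg p2 0)) (pow_nonneg p3 3)) (pow_nonneg p4 1)) (pow_nonneg (sq_nonneg (x+y)) 1),
    mul_nonneg (mul_nonneg (mul_nonneg (mul_nonneg (pow_nonneg p1 0) (pow_nonneg p2 0)) (pow_nonneg p3 3)) (pow_nonneg p4 3)) (pow_nonneg (sq_nonneg (x+y)) 1),
    mul_nonneg (mul_nonneg (mul_nonneg (mul_nonneg (pow_nonneg p1 0) (pow_nonneg p2 0)) (pow_nonneg p3 4)) (pow_nonneg p4 3)) (pow_nonneg (sq_nonneg (x+y)) 0),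
    mul_nonneg (mul_nonneg (mul_nonneg (mul_nonneg (pow_nonneg p1 0) (pow_nonneg p2 1)) (pow_nonneg p3 3)) (pow_nonneg p4 2)) (pow_nonneg (sq_nonneg (x+y)) 1),
    mul_nonneg (mul_nonneg (mul_nonneg (mul_nonneg (pow_nonneg p1 0) (pow_nonneg p2 2)) (pow_nonneg p3 3)) (pow_nonneg p4 0)) (pow_nonneg (sq_nonneg (x+y)) 1),
    mul_nonneg (mul_nonneg (mul_nonneg (mul_nonneg (pow_nonneg p1 0) (pow_nonneg p2 2)) (pow_nonneg p3 3)) (pow_nonneg p4 3)) (pow_nonneg (sq_nonneg (x+y)) 0),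
    mul_nonneg (mul_nonneg (mul_nonneg (mul_nonneg (pow_nonneg p1 1) (pow_nonneg p2 0)) (pow_nonneg p3 2)) (pow_nonneg p4 1)) (pow_nonneg (sq_nonneg (x+y)) 1),
    mul_nonneg (mul_nonneg (mul_nonneg (mul_nonneg (pow_nonneg p1 1) (pow_nonneg p2 0)) (pow_nonneg p3 4)) (pow_nonneg p4 1)) (pow_nonneg (sq_nonneg (x+y)) 0),
    mul_nonneg (mul_nonneg (mul_nonneg (mul_nonneg (pow_nonneg p1 1) (pow_nonneg p2 1)) (pow_nonneg p3 1)) (pow_nonneg p4 1)) (pow_nonneg (sq_nonneg (x+y)) 1),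
    mul_nonneg (mul_nonneg (mul_nonneg (mul_nonneg (pow_nonneg p1 1) (pow_nonneg p2 1)) (pow_nonneg p3 1)) (pow_nonneg p4 2)) (pow_nonneg (sq_nonneg (x+y)) 1),
    mul_nonneg (mul_nonneg (mul_nonneg (mul_nonneg (pow_nonneg p1 1) (pow_nonneg p2 1)) (pow_nonneg p3 1)) (pow_nonneg p4 4)) (pow_nonneg (sq_nonneg (x+y)) 0),
    mul_nonneg (mul_nonneg (mul_nonneg (mul_nonneg (pow_nonneg p1 1) (pow_nonneg p2 2)) (pow_nonneg p3 3)) (pow_nonneg p4 1)) (pow_nonneg (sq_nonneg (x+y)) 0),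
    mul_nonneg (mul_nonneg (mul_nonneg (mul_nonneg (pow_nonneg p1 1) (pow_nonneg p2 3)) (pow_nonneg p3 2)) (pow_nonneg p4 2)) (pow_nonneg (sq_nonneg (x+y)) 0),
    mul_nonneg (mul_nonneg (mul_nonneg (mul_nonneg (pow_nonneg p1 2) (pow_nonneg p2 0)) (pow_nonneg p3 0)) (pow_nonneg p4 2)) (pow_nonneg (sq_nonneg (x+y)) 1),
    mul_nonneg (mul_nonneg (mul_nonneg (mul_nonneg (pow_nonneg p1 2) (pow_nonneg p2 0)) (pow_nonneg p3 0)) (pow_nonneg p4 3)) (pow_nonneg (sq_nonneg (x+y)) 1),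
    mul_nonneg (mul_nonneg (mul_nonneg (mul_nonneg (pow_nonneg p1 2) (pow_nonneg p2 0)) (pow_nonneg p3 2)) (pow_nonneg p4 0)) (pow_nonneg (sq_nonneg (x+y)) 0),
    mul_nonneg (mul_nonneg (mul_nonneg (mul_nonneg (pow_nonneg p1 2) (pow_nonneg p2 0)) (pow_nonneg p3 2)) (pow_nonneg p4 2)) (pow_nonneg (sq_nonneg (x+y)) 0),
    mul_nonneg (mul_nonneg (mul_nonneg (mul_nonneg (pow_nonneg p1 2) (pow_nonneg p2 0)) (pow_nonneg p3 3)) (pow_nonneg p4 2)) (pow_nonneg (sq_nonneg (x+y)) 0),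
    mul_nonneg (mul_nonneg (mul_nonneg (mul_nonneg (pow_nonneg p1 2) (pow_nonneg p2 1)) (pow_nonneg p3 1)) (pow_nonneg p4 4)) (pow_nonneg (sq_nonneg (x+y)) 0),
    mul_nonneg (mul_nonneg (mul_nonneg (mul_nonneg (pow_nonneg p1 2) (pow_nonneg p2 1)) (pow_nonneg p3 3)) (pow_nonneg p4 0)) (pow_nonneg (sq_nonneg (x+y)) 0)]

lemma T2K (x y z : ℝ) (hx1 : -1 ≤ x) (hx2 : x ≤ 1) (hy1 : -1 ≤ y) (hy2 : y ≤ 1)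
    (hz1 : -1 ≤ z) (hz2 : z ≤ 1) (h : x^2 + y^2 + z^2 - 2*(x*y*z) = 1) :
    8*(x*y*z) ≤ 17 + 9*(x+y+z) := by
  have ht : (z - x*y)^2 = (1-x^2)*(1-y^2) := by linear_combination h
  have hA : 0 ≤ 17 + 9*(x+y) + 9*(x*y) - 8*(x*y)^2 := by
    nlinarith [mul_nonneg (by linarith : (0:ℝ) ≤ 1+x) (by linarith : (0:ℝ) ≤ 1+y),
      mul_nonneg (sq_nonneg x) (by nlinarith : (0:ℝ) ≤ 1 - y^2), sq_nonneg x, sq_nonneg y]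
  have hB : (0:ℝ) < 9 - 8*(x*y) := by
    nlinarith [mul_nonneg (by linarith : (0:ℝ) ≤ 1-x) (by linarith : (0:ℝ) ≤ 1+y),
      mul_nonneg (by linarith : (0:ℝ) ≤ 1+x) (by linarith : (0:ℝ) ≤ 1-y)]
  have key : 17 + 9*(x+y+z) - 8*(x*y*z)
      = (17 + 9*(x+y) + 9*(x*y) - 8*(x*y)^2) + (9 - 8*(x*y)) * (z - x*y) := by ring
  rcases le_or_gt 0 (z - x*y) with hpos | hneg
  · nlinarith [mul_nonneg hB.le hpos]
  · have hD := certD x y hx1 hx2 hy1 hy2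
    rw [← ht] at hD
    have hR : (9-8*(x*y))*(x*y-z) ≤ 17+9*(x+y)+9*(x*y)-8*(x*y)^2 := by
      apply le_of_pow_le_pow_left₀ two_ne_zero hA
      calc ((9-8*(x*y))*(x*y-z))^2 = (9-8*(x*y))^2*((z-x*y)^2) := by ring
        _ ≤ _ := hD
    linarith [key, hR]

lemma algK (x y z : ℝ) (hx1 : -1 ≤ x) (hx2 : x ≤ 1) (hy1 : -1 ≤ y) (hy2 : y ≤ 1)
    (hz1 : -1 ≤ z) (hz2 : z ≤ 1) (h : x^2 + y^2 + z^2 - 2*(x*y*z) = 1) :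
    (1-x)*(2*x-1)^2/2 + (1-y)*(2*y-1)^2/2 + (1-z)*(2*z-1)^2/2 ≤ 18 := by
  have h8 := T2K x y z hx1 hx2 hy1 hy2 hz1 hz2 h
  nlinarith [mul_nonneg (by linarith : (0:ℝ) ≤ x+1) (sq_nonneg (x-1)),
    mul_nonneg (by linarith : (0:ℝ) ≤ y+1) (sq_nonneg (y-1)),
    mul_nonneg (by linarith : (0:ℝ) ≤ z+1) (sq_nonneg (z-1))]

/-! #### The main trigonometric inequality -/

lemma G0K_cos_form (d : ℝ) :
    G0K d = (1 - Real.cos (2 * (Real.pi * d / 3))) * (2 * Real.cos (2 * (Real.pi * d / 3)) - 1)^2 / 2 := by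
  have hc2 : Real.cos (2 * (Real.pi * d / 3)) = 1 - 2 * Real.sin (Real.pi * d / 3) ^ 2 := by
    rw [Real.cos_two_mul]
    linear_combination 2 * (Real.sin_sq_add_cos_sq (Real.pi * d / 3))
  have h3u : Real.pi * d = 3 * (Real.pi * d / 3) := by ring
  have hs3 := Real.sin_three_mul (Real.pi * d / 3)
  rw [← h3u] at hs3
  unfold G0K g0K
  rw [hs3, hc2]
  ring

lemma mainInequality (d1 d3 d5 : ℝ) (h : d1 + d3 + d5 = 0) :
    G0K d1 + G0K d3 + G0K d5 ≤ 18 := by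
  set u1 := Real.pi * d1 / 3 with hu1
  set u3 := Real.pi * d3 / 3 with hu3
  set u5 := Real.pi * d5 / 3 with hu5
  set X1 := Real.cos (2 * u1) with hX1
  set X3 := Real.cos (2 * u3) with hX3
  set X5 := Real.cos (2 * u5) with hX5
  have hsum : 2 * u5 = -(2 * u1 + 2 * u3) := by
    rw [hu1, hu3, hu5]
    have : d5 = -(d1 + d3) := by linarith
    rw [this]; ring
  have hX5e : X5 = X1 * X3 - Real.sin (2*u1) * Real.sin (2*u3) := by
    rw [hX5, hsum, Real.cos_neg, Real.cos_add]
  have h1 : Real.sin (2*u1) ^ 2 = 1 - X1^2 := by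
    linear_combination Real.sin_sq_add_cos_sq (2*u1)
  have h3 : Real.sin (2*u3) ^ 2 = 1 - X3^2 := by
    linear_combination Real.sin_sq_add_cos_sq (2*u3)
  have hcon : X1^2 + X3^2 + X5^2 - 2*(X1*X3*X5) = 1 := by
    rw [hX5e]
    linear_combination (Real.sin (2*u3)^2) * h1 + (1 - X1^2) * h3
  have e1 := G0K_cos_form d1
  have e3 := G0K_cos_form d3
  have e5 := G0K_cos_form d5
  rw [← hu1, ← hX1] at e1
  rw [← hu3, ← hX3] at e3
  rw [← hu5, ← hX5] at e5
  rw [e1, e3, e5]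
  have := algK X1 X3 X5 (Real.neg_one_le_cos _) (Real.cos_le_one _)
    (Real.neg_one_le_cos _) (Real.cos_le_one _) (Real.neg_one_le_cos _) (Real.cos_le_one _) hcon
  linarith [this]

/-! #### Rewriting `VjK`, `VtK` through `G0K` -/

lemma VjK_eq (j : ℤ) (x : ℂ) : VjK j x = G0K (dotK j x) := by
  unfold VjK G0K g0K
  set d := dotK j x
  have e1 : Real.pi * d + 3 * Real.pi / 2 = (Real.pi * d + Real.pi / 2) + Real.pi := by ring
  have e2 : (Real.pi * d + 3 * Real.pi / 2) / 3 = Real.pi * d / 3 + Real.pi / 2 := by ring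
  rw [e2, e1, Real.cos_add_pi, Real.cos_add_pi_div_two, Real.cos_add_pi_div_two]
  ring

lemma VtK_eq (x : ℂ) : VtK x = G0K (dotK 1 x) + G0K (dotK 3 x) + G0K (dotK 5 x) := by
  unfold VtK; rw [VjK_eq, VjK_eq, VjK_eq]

lemma dot_sum (x : ℂ) : dotK 1 x + dotK 3 x + dotK 5 x = 0 := by
  rw [dot1, dot3, dot5]; ring

lemma VtK_le (x : ℂ) : VtK x ≤ 18 := by
  rw [VtK_eq]
  exact mainInequality _ _ _ (dot_sum x)

lemma VtK_one : VtK 1 = 18 := by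
  rw [VtK_eq, dot1, dot3, dot5]
  simp only [Complex.one_re, Complex.one_im, mul_zero, mul_one, sub_zero, mul_zero]
  rw [G0K_zero, G0K_th, G0K_nth]
  norm_num

lemma sSup_VtK : sSup (Set.range VtK) = 18 := by
  apply le_antisymm
  · apply csSup_le ⟨VtK 1, Set.mem_range_self 1⟩
    rintro y ⟨x, rfl⟩
    exact VtK_le x
  · have hbdd : BddAbove (Set.range VtK) := by
      refine ⟨18, ?_⟩
      rintro y ⟨x, rfl⟩
      exact VtK_le x
    exact le_csSup hbdd ⟨1, VtK_one⟩

lemma VK_eq (x : ℂ) : VK x = 18 - VtK x := by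
  unfold VK; rw [sSup_VtK]

/-! #### Invariance -/

lemma rho_eq : Complex.exp (Real.pi * Complex.I / 3) = nuK 2 := by
  unfold nuK; congr 1; norm_num

lemma rot_re (x : ℂ) : (nuK 2 * x).re = (1/2)*x.re - Real.sqrt 3/2*x.im := by
  rw [Complex.mul_re, nuK_two_re, nuK_two_im]

lemma rot_im (x : ℂ) : (nuK 2 * x).im = Real.sqrt 3/2*x.re + (1/2)*x.im := by
  rw [Complex.mul_im, nuK_two_re, nuK_two_im]; ring

lemma dot1_rot (x : ℂ) : dotK 1 (nuK 2 * x) = -dotK 3 x := by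
  rw [dot1, rot_im, dot3]; linear_combination (x.re/2)*sqrt3_sq

lemma dot3_rot (x : ℂ) : dotK 3 (nuK 2 * x) = -dotK 5 x := by
  rw [dot3, rot_re, rot_im, dot5]; linear_combination (-(x.re)/4)*sqrt3_sq

lemma dot5_rot (x : ℂ) : dotK 5 (nuK 2 * x) = -dotK 1 x := by
  rw [dot5, rot_re, rot_im, dot1]; linear_combination (-(x.re)/4)*sqrt3_sq

lemma VtK_rot (x : ℂ) : VtK (nuK 2 * x) = VtK x := by
  rw [VtK_eq, VtK_eq, dot1_rot, dot3_rot, dot5_rot, G0K_neg, G0K_neg, G0K_neg]; ring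

lemma VtK_t1 (x : ℂ) : VtK (x + 2 * nuK 1) = VtK x := by
  have hre : (x + 2*nuK 1).re = x.re + 2 := by rw [nuK_one]; simp
  have him : (x + 2*nuK 1).im = x.im := by rw [nuK_one]; simp
  have h1 : dotK 1 (x + 2*nuK 1) = dotK 1 x := by rw [dot1, dot1, him]
  have h3 : dotK 3 (x + 2*nuK 1) = 3*((-1 : ℤ) : ℝ) + dotK 3 x := by
    rw [dot3, dot3, hre, him]; push_cast; ring
  have h5 : dotK 5 (x + 2*nuK 1) = 3*((1 : ℤ) : ℝ) + dotK 5 x := by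
    rw [dot5, dot5, hre, him]; push_cast; ring
  rw [VtK_eq, VtK_eq, h1, h3, h5, G0K_shift, G0K_shift]

lemma two_nuK_two_re : (2 * nuK 2 : ℂ).re = 1 := by
  rw [Complex.mul_re, nuK_two_re, nuK_two_im]; norm_num

lemma two_nuK_two_im : (2 * nuK 2 : ℂ).im = Real.sqrt 3 := by
  rw [Complex.mul_im, nuK_two_re, nuK_two_im]; simp; ring

lemma VtK_t2 (x : ℂ) : VtK (x + 2 * nuK 2) = VtK x := by
  have hre : (x + 2*nuK 2).re = x.re + 1 := by rw [Complex.add_re, two_nuK_two_re]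
  have him : (x + 2*nuK 2).im = x.im + Real.sqrt 3 := by rw [Complex.add_im, two_nuK_two_im]
  have h1 : dotK 1 (x + 2*nuK 2) = 3*((1 : ℤ) : ℝ) + dotK 1 x := by
    rw [dot1, dot1, him]; push_cast; linear_combination sqrt3_sq
  have h3 : dotK 3 (x + 2*nuK 2) = 3*((-1 : ℤ) : ℝ) + dotK 3 x := by
    rw [dot3, dot3, hre, him]; push_cast; linear_combination (-(1:ℝ)/2)*sqrt3_sq
  have h5 : dotK 5 (x + 2*nuK 2) = dotK 5 x := by
    rw [dot5, dot5, hre, him]; linear_combination (-(1:ℝ)/2)*sqrt3_sq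
  rw [VtK_eq, VtK_eq, h1, h3, h5, G0K_shift, G0K_shift]

/-! #### Lattice points -/

lemma lat_re (α₁ α₂ ℓ : ℤ) : (2*(α₁:ℂ)*nuK 1 + 2*(α₂:ℂ)*nuK 2 + nuK ℓ).re
    = 2*(α₁:ℝ) + (α₂:ℝ) + (nuK ℓ).re := by
  rw [nuK_one]
  simp [Complex.add_re, Complex.mul_re, Complex.mul_im, nuK_two_re, nuK_two_im]
  ring

lemma lat_im (α₁ α₂ ℓ : ℤ) : (2*(α₁:ℂ)*nuK 1 + 2*(α₂:ℂ)*nuK 2 + nuK ℓ).im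
    = Real.sqrt 3 * (α₂:ℝ) + (nuK ℓ).im := by
  rw [nuK_one]
  simp [Complex.add_im, Complex.mul_re, Complex.mul_im, nuK_two_re, nuK_two_im]
  ring

lemma dots_l1 (α₁ α₂ : ℤ) :
    dotK 1 (2*(α₁:ℂ)*nuK 1 + 2*(α₂:ℂ)*nuK 2 + nuK 1) = 3*((α₂:ℤ):ℝ) + 0
    ∧ dotK 3 (2*(α₁:ℂ)*nuK 1 + 2*(α₂:ℂ)*nuK 2 + nuK 1) = 3*(((-α₁-α₂:ℤ)):ℝ) + -(3/2)
    ∧ dotK 5 (2*(α₁:ℂ)*nuK 1 + 2*(α₂:ℂ)*nuK 2 + nuK 1) = 3*((α₁:ℤ):ℝ) + (3/2) := by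
  have hr : (nuK 1).re = 1 := by rw [nuK_one]; simp
  have hi : (nuK 1).im = 0 := by rw [nuK_one]; simp
  refine ⟨?_, ?_, ?_⟩
  · rw [dot1, lat_im, hi]; push_cast; linear_combination ((α₂:ℝ))*sqrt3_sq
  · rw [dot3, lat_re, lat_im, hr, hi]; push_cast; linear_combination (-((α₂:ℝ))/2)*sqrt3_sq
  · rw [dot5, lat_re, lat_im, hr, hi]; push_cast; linear_combination (-((α₂:ℝ))/2)*sqrt3_sq

lemma dots_l3 (α₁ α₂ : ℤ) :
    dotK 1 (2*(α₁:ℂ)*nuK 1 + 2*(α₂:ℂ)*nuK 2 + nuK 3) = 3*((α₂:ℤ):ℝ) + (3/2)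
    ∧ dotK 3 (2*(α₁:ℂ)*nuK 1 + 2*(α₂:ℂ)*nuK 2 + nuK 3) = 3*(((-α₁-α₂:ℤ)):ℝ) + 0
    ∧ dotK 5 (2*(α₁:ℂ)*nuK 1 + 2*(α₂:ℂ)*nuK 2 + nuK 3) = 3*((α₁:ℤ):ℝ) + -(3/2) := by
  refine ⟨?_, ?_, ?_⟩
  · rw [dot1, lat_im, nuK_three_im]; push_cast
    linear_combination ((α₂:ℝ) + 1/2)*sqrt3_sq
  · rw [dot3, lat_re, lat_im, nuK_three_re, nuK_three_im]; push_cast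
    linear_combination (-((α₂:ℝ))/2 - 1/4)*sqrt3_sq
  · rw [dot5, lat_re, lat_im, nuK_three_re, nuK_three_im]; push_cast
    linear_combination (-((α₂:ℝ))/2 - 1/4)*sqrt3_sq

lemma dots_l5 (α₁ α₂ : ℤ) :
    dotK 1 (2*(α₁:ℂ)*nuK 1 + 2*(α₂:ℂ)*nuK 2 + nuK 5) = 3*((α₂:ℤ):ℝ) + -(3/2)
    ∧ dotK 3 (2*(α₁:ℂ)*nuK 1 + 2*(α₂:ℂ)*nuK 2 + nuK 5) = 3*(((-α₁-α₂:ℤ)):ℝ) + (3/2)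
    ∧ dotK 5 (2*(α₁:ℂ)*nuK 1 + 2*(α₂:ℂ)*nuK 2 + nuK 5) = 3*((α₁:ℤ):ℝ) + 0 := by
  refine ⟨?_, ?_, ?_⟩
  · rw [dot1, lat_im, nuK_five_im]; push_cast
    linear_combination ((α₂:ℝ) - 1/2)*sqrt3_sq
  · rw [dot3, lat_re, lat_im, nuK_five_re, nuK_five_im]; push_cast
    linear_combination (-((α₂:ℝ))/2 + 1/4)*sqrt3_sq
  · rw [dot5, lat_re, lat_im, nuK_five_re, nuK_five_im]; push_cast
    linear_combination (-((α₂:ℝ))/2 + 1/4)*sqrt3_sq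

lemma VtK_lattice (m : ℂ) (hm : m ∈ GammaK) : VtK m = 18 := by
  obtain ⟨α₁, α₂, ℓ, hℓ, rfl⟩ := hm
  rcases hℓ with rfl | rfl | rfl
  · obtain ⟨h1, h3, h5⟩ := dots_l1 α₁ α₂
    rw [VtK_eq, h1, h3, h5, G0K_shift, G0K_shift, G0K_shift, G0K_zero, G0K_th, G0K_nth]
    norm_num
  · obtain ⟨h1, h3, h5⟩ := dots_l3 α₁ α₂
    rw [VtK_eq, h1, h3, h5, G0K_shift, G0K_shift, G0K_shift, G0K_zero, G0K_th, G0K_nth]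
    norm_num
  · obtain ⟨h1, h3, h5⟩ := dots_l5 α₁ α₂
    rw [VtK_eq, h1, h3, h5, G0K_shift, G0K_shift, G0K_shift, G0K_zero, G0K_th, G0K_nth]
    norm_num

/-! #### The linear forms as continuous linear maps, and the Hessian -/

def LK1 : ℂ →L[ℝ] ℝ := (Real.sqrt 3) • Complex.imCLM
def LK3 : ℂ →L[ℝ] ℝ := (-(3/2) : ℝ) • Complex.reCLM + (-(Real.sqrt 3/2)) • Complex.imCLM
def LK5 : ℂ →L[ℝ] ℝ := ((3/2) : ℝ) • Complex.reCLM + (-(Real.sqrt 3/2)) • Complex.imCLM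

lemma LK1_apply (x : ℂ) : LK1 x = dotK 1 x := by
  simp [LK1, dot1]

lemma LK3_apply (x : ℂ) : LK3 x = dotK 3 x := by
  simp [LK3, dot3]; ring

lemma LK5_apply (x : ℂ) : LK5 x = dotK 5 x := by
  simp [LK5, dot5]; ring

lemma VtK_funeq : VtK = fun x => G0K (LK1 x) + G0K (LK3 x) + G0K (LK5 x) := by
  funext x; rw [VtK_eq, LK1_apply, LK3_apply, LK5_apply]

lemma contDiff_VtK : ContDiff ℝ (⊤ : ℕ∞) VtK := by
  rw [VtK_funeq]
  exact ((contDiff_G0K.comp LK1.contDiff).add (contDiff_G0K.comp LK3.contDiff)).add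
    (contDiff_G0K.comp LK5.contDiff)

lemma contDiff_VK : ContDiff ℝ (⊤ : ℕ∞) VK := by
  have h : VK = fun x => sSup (Set.range VtK) - VtK x := rfl
  rw [h]
  exact contDiff_const.sub contDiff_VtK

lemma hasFDerivAt_VtK (x : ℂ) :
    HasFDerivAt VtK (G1K (LK1 x) • LK1 + G1K (LK3 x) • LK3 + G1K (LK5 x) • LK5) x := by
  rw [VtK_funeq]
  have h1 : HasFDerivAt (fun y => G0K (LK1 y)) (G1K (LK1 x) • LK1) x :=
    (hasDerivAt_G0K (LK1 x)).comp_hasFDerivAt x LK1.hasFDerivAt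
  have h3 : HasFDerivAt (fun y => G0K (LK3 y)) (G1K (LK3 x) • LK3) x :=
    (hasDerivAt_G0K (LK3 x)).comp_hasFDerivAt x LK3.hasFDerivAt
  have h5 : HasFDerivAt (fun y => G0K (LK5 y)) (G1K (LK5 x) • LK5) x :=
    (hasDerivAt_G0K (LK5 x)).comp_hasFDerivAt x LK5.hasFDerivAt
  exact (h1.add h3).add h5

lemma hasFDerivAt_VK (x : ℂ) :
    HasFDerivAt VK (-(G1K (LK1 x) • LK1 + G1K (LK3 x) • LK3 + G1K (LK5 x) • LK5)) x :=
  (hasFDerivAt_VtK x).const_sub (sSup (Set.range VtK))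

lemma fderiv_VK : fderiv ℝ VK
    = fun x => -(G1K (LK1 x) • LK1 + G1K (LK3 x) • LK3 + G1K (LK5 x) • LK5) :=
  funext fun x => (hasFDerivAt_VK x).fderiv

lemma hessian_VK (m w : ℂ) : iteratedFDeriv ℝ 2 VK m ![w, w]
    = -(G2K (dotK 1 m) * (dotK 1 w * dotK 1 w) + G2K (dotK 3 m) * (dotK 3 w * dotK 3 w)
        + G2K (dotK 5 m) * (dotK 5 w * dotK 5 w)) := by
  have h1 : HasFDerivAt (fun x => G1K (LK1 x)) (G2K (LK1 m) • LK1) m :=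
    (hasDerivAt_G1K (LK1 m)).comp_hasFDerivAt m LK1.hasFDerivAt
  have h3 : HasFDerivAt (fun x => G1K (LK3 x)) (G2K (LK3 m) • LK3) m :=
    (hasDerivAt_G1K (LK3 m)).comp_hasFDerivAt m LK3.hasFDerivAt
  have h5 : HasFDerivAt (fun x => G1K (LK5 x)) (G2K (LK5 m) • LK5) m :=
    (hasDerivAt_G1K (LK5 m)).comp_hasFDerivAt m LK5.hasFDerivAt
  have hD : HasFDerivAt (fun x => -(G1K (LK1 x) • LK1 + G1K (LK3 x) • LK3 + G1K (LK5 x) • LK5))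
      (-(((G2K (LK1 m) • LK1).smulRight LK1) + ((G2K (LK3 m) • LK3).smulRight LK3)
        + ((G2K (LK5 m) • LK5).smulRight LK5))) m :=
    (((h1.smul_const LK1).add (h3.smul_const LK3)).add (h5.smul_const LK5)).neg
  have h2 : HasFDerivAt (fderiv ℝ VK)
      (-(((G2K (LK1 m) • LK1).smulRight LK1) + ((G2K (LK3 m) • LK3).smulRight LK3)
        + ((G2K (LK5 m) • LK5).smulRight LK5))) m := by
    rw [fderiv_VK]; exact hD
  rw [iteratedFDeriv_two_apply, h2.fderiv]
  simp only [Matrix.cons_val_zero, Matrix.cons_val_one, Matrix.head_cons,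
    ContinuousLinearMap.neg_apply, ContinuousLinearMap.add_apply,
    ContinuousLinearMap.smulRight_apply, ContinuousLinearMap.coe_smul', Pi.smul_apply,
    smul_eq_mul, LK1_apply, LK3_apply, LK5_apply]
  ring

/-! #### Nondegeneracy of pairs of linear forms -/

lemma pair35 (w : ℂ) (hw : w ≠ 0) : 0 < dotK 3 w ^ 2 + dotK 5 w ^ 2 := by
  rcases (sq_nonneg (dotK 3 w)).lt_or_eq with h | h
  · nlinarith [sq_nonneg (dotK 5 w)]
  rcases (sq_nonneg (dotK 5 w)).lt_or_eq with h' | h'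
  · nlinarith [sq_nonneg (dotK 3 w)]
  exfalso; apply hw
  have h3 : dotK 3 w = 0 := by nlinarith
  have h5 : dotK 5 w = 0 := by nlinarith
  rw [dot3] at h3; rw [dot5] at h5
  have hre : w.re = 0 := by linarith
  have him : Real.sqrt 3 * w.im = 0 := by linarith
  have him' : w.im = 0 := by
    rcases mul_eq_zero.mp him with h | h
    · exact absurd h sqrt3_pos.ne'
    · exact h
  exact Complex.ext hre him'

lemma pair15 (w : ℂ) (hw : w ≠ 0) : 0 < dotK 1 w ^ 2 + dotK 5 w ^ 2 := by
  rcases (sq_nonneg (dotK 1 w)).lt_or_eq with h | h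
  · nlinarith [sq_nonneg (dotK 5 w)]
  rcases (sq_nonneg (dotK 5 w)).lt_or_eq with h' | h'
  · nlinarith [sq_nonneg (dotK 1 w)]
  exfalso; apply hw
  have h1 : dotK 1 w = 0 := by nlinarith
  have h5 : dotK 5 w = 0 := by nlinarith
  rw [dot1] at h1; rw [dot5] at h5
  have him : w.im = 0 := by
    rcases mul_eq_zero.mp h1 with h'' | h''
    · exact absurd h'' sqrt3_pos.ne'
    · exact h''
  have hre : w.re = 0 := by rw [him] at h5; linarith
  exact Complex.ext hre him

lemma pair13 (w : ℂ) (hw : w ≠ 0) : 0 < dotK 1 w ^ 2 + dotK 3 w ^ 2 := by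
  rcases (sq_nonneg (dotK 1 w)).lt_or_eq with h | h
  · nlinarith [sq_nonneg (dotK 3 w)]
  rcases (sq_nonneg (dotK 3 w)).lt_or_eq with h' | h'
  · nlinarith [sq_nonneg (dotK 1 w)]
  exfalso; apply hw
  have h1 : dotK 1 w = 0 := by nlinarith
  have h3 : dotK 3 w = 0 := by nlinarith
  rw [dot1] at h1; rw [dot3] at h3
  have him : w.im = 0 := by
    rcases mul_eq_zero.mp h1 with h'' | h''
    · exact absurd h'' sqrt3_pos.ne'
    · exact h''
  have hre : w.re = 0 := by rw [him] at h3; linarith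
  exact Complex.ext hre him

end Aux

theorem stmt8 :
    -- smoothness
    ContDiff ℝ (⊤ : ℕ∞) VK
    -- nonnegativity
    ∧ (∀ x : ℂ, 0 ≤ VK x)
    -- invariance under the generators of `G` (equivalently under all of `G`):
    -- the rotation `r` of angle `π/3` and the translations `t₁`, `t₂`
    ∧ (∀ x : ℂ, VK (Complex.exp (Real.pi * Complex.I / 3) * x) = VK x)
    ∧ (∀ x : ℂ, VK (x + 2 * nuK 1) = VK x)
    ∧ (∀ x : ℂ, VK (x + 2 * nuK 2) = VK x)
    -- every point of the kagome lattice is a local minimum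
    ∧ (∀ m ∈ GammaK, IsLocalMin VK m)
    -- the Hessian is positive definite at every point of the lattice
    ∧ (∀ m ∈ GammaK, ∀ w : ℂ, w ≠ 0 → 0 < iteratedFDeriv ℝ 2 VK m ![w, w]) := by
  refine ⟨contDiff_VK, ?_, ?_, ?_, ?_, ?_, ?_⟩
  · intro x
    rw [VK_eq]
    linarith [VtK_le x]
  · intro x
    rw [VK_eq, VK_eq, rho_eq, VtK_rot]
  · intro x
    rw [VK_eq, VK_eq, VtK_t1]
  · intro x
    rw [VK_eq, VK_eq, VtK_t2]
  · intro m hm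
    have h0 : VK m = 0 := by rw [VK_eq, VtK_lattice m hm]; ring
    have hall : ∀ y, VK m ≤ VK y := by
      intro y; rw [h0, VK_eq]; linarith [VtK_le y]
    exact Filter.Eventually.of_forall hall
  · rintro m ⟨α₁, α₂, ℓ, hℓ, rfl⟩ w hw
    have hπ := Real.pi_pos
    rcases hℓ with rfl | rfl | rfl
    · obtain ⟨h1, h3, h5⟩ := dots_l1 α₁ α₂
      rw [hessian_VK, h1, h3, h5, G2K_shift, G2K_shift, G2K_shift, G2K_zero, G2K_th, G2K_nth]
      have hsum := dot_sum w
      have hq1 : dotK 1 w = -(dotK 3 w) - dotK 5 w := by linarith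
      rw [hq1]
      nlinarith [mul_pos (pow_pos hπ 2) (pair35 w hw),
        mul_nonneg (sq_nonneg Real.pi) (sq_nonneg (dotK 3 w - dotK 5 w))]
    · obtain ⟨h1, h3, h5⟩ := dots_l3 α₁ α₂
      rw [hessian_VK, h1, h3, h5, G2K_shift, G2K_shift, G2K_shift, G2K_zero, G2K_th, G2K_nth]
      have hsum := dot_sum w
      have hq3 : dotK 3 w = -(dotK 1 w) - dotK 5 w := by linarith
      rw [hq3]
      nlinarith [mul_pos (pow_pos hπ 2) (pair15 w hw),
        mul_nonneg (sq_nonneg Real.pi) (sq_nonneg (dotK 1 w - dotK 5 w))]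
    · obtain ⟨h1, h3, h5⟩ := dots_l5 α₁ α₂
      rw [hessian_VK, h1, h3, h5, G2K_shift, G2K_shift, G2K_shift, G2K_zero, G2K_th, G2K_nth]
      have hsum := dot_sum w
      have hq5 : dotK 5 w = -(dotK 1 w) - dotK 3 w := by linarith
      rw [hq5]
      nlinarith [mul_pos (pow_pos hπ 2) (pair13 w hw),
        mul_nonneg (sq_nonneg Real.pi) (sq_nonneg (dotK 1 w - dotK 3 w))]

end
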